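/- Let A = B₁C₁ = B₂C₂ give subgroups G₁ = C₁⁻¹ℤ^n/ℤ^n ⊆ G₂ = C₂⁻¹ℤ^n/ℤ^n of A⁻¹ℤ^n/ℤ^n. Then the transposed groups satisfy G₂ᵀ ⊆ G₁ᵀ, and the quotient G₂/G₁ is isomorphic to G₁ᵀ/G₂ᵀ. -/

import Mathlib

open Matrix QuotientAddGroup

noncomputable section

def IntLat (n : ℕ) : AddSubgroup (Fin n → ℚ) where
  carrier := {v | ∀ i, ∃ m : ℤ, v i = (m : ℚ)}
  add_mem' := by
    intro a b ha hb i
    obtain ⟨p, hp⟩ := ha i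
    obtain ⟨q, hq⟩ := hb i
    exact ⟨p + q, by simp [hp, hq]⟩
  zero_mem' := fun i => ⟨0, by simp⟩
  neg_mem' := by
    intro a ha i
    obtain ⟨p, hp⟩ := ha i
    exact ⟨-p, by simp [hp]⟩

abbrev QuotLat (n : ℕ) := (Fin n → ℚ) ⧸ IntLat n

def ratMat {n : ℕ} (A : Matrix (Fin n) (Fin n) ℤ) : Matrix (Fin n) (Fin n) ℚ :=
  A.map ((↑) : ℤ → ℚ)

def AutW {n : ℕ} (A : Matrix (Fin n) (Fin n) ℤ) : AddSubgroup (QuotLat n) :=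
  (AddSubgroup.comap (ratMat A).mulVecLin.toAddMonoidHom (IntLat n)).map
    (QuotientAddGroup.mk' (IntLat n))

def ZinQ : AddSubgroup ℚ := (Int.castAddHom ℚ).range

def sumHom (n : ℕ) : (Fin n → ℚ) →+ ℚ :=
  AddMonoidHom.mk' (fun v => ∑ i, v i) (by
    intro a b
    simpa using Finset.sum_add_distrib)

def qsum (n : ℕ) : QuotLat n →+ ℚ ⧸ ZinQ :=
  QuotientAddGroup.lift (IntLat n) ((QuotientAddGroup.mk' ZinQ).comp (sumHom n)) (by
    intro v hv
    have hv' : ∀ i, ∃ m : ℤ, v i = (m : ℚ) := hv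
    choose m hm using hv'
    have hmem : (∑ i, v i) ∈ ZinQ := ⟨∑ i, m i, by push_cast [hm]; simp⟩
    simpa [sumHom] using (QuotientAddGroup.eq_zero_iff _).mpr hmem)

def SLW {n : ℕ} (A : Matrix (Fin n) (Fin n) ℤ) : AddSubgroup (QuotLat n) :=
  AutW A ⊓ (qsum n).ker

def WellFormedWeights {n : ℕ} (w : Fin n → ℤ) (d : ℤ) : Prop :=
  (∀ i, Finset.gcd (Finset.univ.erase i) w = 1) ∧
  ∀ i j, i ≠ j → ((Finset.gcd ((Finset.univ.erase i).erase j) w) ∣ d)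


namespace Stmt12

variable {n : ℕ}

def piZ : ℚ →+ ℚ ⧸ ZinQ := QuotientAddGroup.mk' ZinQ

def intV {n : ℕ} (x : Fin n → ℤ) : Fin n → ℚ := fun i => (x i : ℚ)

lemma intV_add (x y : Fin n → ℤ) : intV (x + y) = intV x + intV y := by
  funext i; simp [intV]

lemma intV_mem (x : Fin n → ℤ) : intV x ∈ IntLat n := fun i => ⟨x i, rfl⟩

lemma mem_intLat_iff {v : Fin n → ℚ} : v ∈ IntLat n ↔ ∃ x : Fin n → ℤ, intV x = v := by
  constructor
  · intro hv
    choose m hm using hv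
    exact ⟨m, by funext i; exact (hm i).symm⟩
  · rintro ⟨x, rfl⟩; exact intV_mem x

lemma ratMat_mulVec_intV (M : Matrix (Fin n) (Fin n) ℤ) (x : Fin n → ℤ) :
    ratMat M *ᵥ intV x = intV (M *ᵥ x) := by
  funext i
  simp only [ratMat, intV, Matrix.mulVec, dotProduct, Matrix.map_apply]
  push_cast
  rfl

lemma intLat_stable (M : Matrix (Fin n) (Fin n) ℤ) {v : Fin n → ℚ} (hv : v ∈ IntLat n) :
    ratMat M *ᵥ v ∈ IntLat n := by
  obtain ⟨x, rfl⟩ := mem_intLat_iff.mp hv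
  rw [ratMat_mulVec_intV]; exact intV_mem _

lemma dot_intV (x y : Fin n → ℤ) : intV x ⬝ᵥ intV y = ((x ⬝ᵥ y : ℤ) : ℚ) := by
  simp [intV, dotProduct]

lemma mem_ZinQ_iff {q : ℚ} : q ∈ ZinQ ↔ ∃ m : ℤ, (m : ℚ) = q := by
  constructor
  · rintro ⟨m, hm⟩; exact ⟨m, hm⟩
  · rintro ⟨m, hm⟩; exact ⟨m, hm⟩

lemma piZ_int (m : ℤ) : piZ (m : ℚ) = 0 := by
  rw [piZ, QuotientAddGroup.mk'_apply, QuotientAddGroup.eq_zero_iff]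
  exact ⟨m, rfl⟩

lemma piZ_eq_zero_iff {q : ℚ} : piZ q = 0 ↔ ∃ m : ℤ, (m : ℚ) = q := by
  rw [piZ, QuotientAddGroup.mk'_apply, QuotientAddGroup.eq_zero_iff, mem_ZinQ_iff]

lemma isUnit_ratMat_det {M : Matrix (Fin n) (Fin n) ℤ} (hM : M.det ≠ 0) :
    IsUnit (ratMat M).det := by
  have h := RingHom.map_det (Int.castRingHom ℚ) M
  rw [isUnit_iff_ne_zero]
  have h2 : (ratMat M).det = (M.det : ℚ) := h.symm
  rw [h2]
  exact_mod_cast hM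

lemma ratMat_mul (M N : Matrix (Fin n) (Fin n) ℤ) :
    ratMat (M * N) = ratMat M * ratMat N :=
  Matrix.map_mul (f := Int.castRingHom ℚ)

lemma mk_mem_AutW_iff (M : Matrix (Fin n) (Fin n) ℤ) (v : Fin n → ℚ) :
    QuotientAddGroup.mk' (IntLat n) v ∈ AutW M ↔ ratMat M *ᵥ v ∈ IntLat n := by
  constructor
  · rintro ⟨w, hw, hmk⟩
    rw [QuotientAddGroup.mk'_eq_mk'] at hmk
    obtain ⟨z, hz, rfl⟩ := hmk
    rw [Matrix.mulVec_add]
    exact (IntLat n).add_mem (by simpa [Matrix.mulVecLin] using hw) (intLat_stable M hz)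
  · intro hv
    exact ⟨v, by simpa [Matrix.mulVecLin] using hv, rfl⟩


/-- The canonical parametrization of `AutW M` by integer vectors. -/
def theta (M : Matrix (Fin n) (Fin n) ℚ) : (Fin n → ℤ) →+ QuotLat n :=
  AddMonoidHom.mk' (fun x => QuotientAddGroup.mk' (IntLat n) (M⁻¹ *ᵥ intV x)) (by
    intro a b
    rw [intV_add, Matrix.mulVec_add, map_add])

lemma theta_apply (M : Matrix (Fin n) (Fin n) ℚ) (x : Fin n → ℤ) :
    theta M x = QuotientAddGroup.mk' (IntLat n) (M⁻¹ *ᵥ intV x) := rfl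

lemma theta_mem {M : Matrix (Fin n) (Fin n) ℤ} (hM : M.det ≠ 0) (x : Fin n → ℤ) :
    theta (ratMat M) x ∈ AutW M := by
  rw [theta_apply, mk_mem_AutW_iff, Matrix.mulVec_mulVec,
    Matrix.mul_nonsing_inv _ (isUnit_ratMat_det hM), Matrix.one_mulVec]
  exact intV_mem x

lemma theta_surj {M : Matrix (Fin n) (Fin n) ℤ} (hM : M.det ≠ 0) {g : QuotLat n}
    (hg : g ∈ AutW M) : ∃ x, theta (ratMat M) x = g := by
  obtain ⟨w, hw, hmk⟩ := hg
  have hw' : ratMat M *ᵥ w ∈ IntLat n := by simpa [Matrix.mulVecLin] using hw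
  obtain ⟨x, hx⟩ := mem_intLat_iff.mp hw'
  refine ⟨x, ?_⟩
  rw [theta_apply, hx, Matrix.mulVec_mulVec,
    Matrix.nonsing_inv_mul _ (isUnit_ratMat_det hM), Matrix.one_mulVec]
  exact hmk

lemma theta_mem_AutW_iff (M : Matrix (Fin n) (Fin n) ℚ) (N : Matrix (Fin n) (Fin n) ℤ)
    (x : Fin n → ℤ) :
    theta M x ∈ AutW N ↔ (ratMat N * M⁻¹) *ᵥ intV x ∈ IntLat n := by
  rw [theta_apply, mk_mem_AutW_iff, Matrix.mulVec_mulVec]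

/-- The subgroup `D·ℤⁿ` of `ℤⁿ`, described as `{x | D⁻¹x ∈ ℤⁿ}`. -/
def KSub (D : Matrix (Fin n) (Fin n) ℤ) : AddSubgroup (Fin n → ℤ) where
  carrier := {x | (ratMat D)⁻¹ *ᵥ intV x ∈ IntLat n}
  add_mem' := by
    intro a b ha hb
    simp only [Set.mem_setOf_eq, intV_add, Matrix.mulVec_add] at *
    exact (IntLat n).add_mem ha hb
  zero_mem' := by
    have : intV (0 : Fin n → ℤ) = 0 := by funext i; simp [intV]
    simp only [Set.mem_setOf_eq, this, Matrix.mulVec_zero]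
    exact (IntLat n).zero_mem
  neg_mem' := by
    intro a ha
    have : intV (-a) = -intV a := by funext i; simp [intV]
    simp only [Set.mem_setOf_eq, this, Matrix.mulVec_neg]
    exact (IntLat n).neg_mem ha

lemma mem_KSub {D : Matrix (Fin n) (Fin n) ℤ} {x : Fin n → ℤ} :
    x ∈ KSub D ↔ (ratMat D)⁻¹ *ᵥ intV x ∈ IntLat n := Iff.rfl


lemma quotEquivK {M N E : Matrix (Fin n) (Fin n) ℤ} (hM : M.det ≠ 0)
    (hNE : ratMat N * (ratMat M)⁻¹ = (ratMat E)⁻¹) :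
    Nonempty (((Fin n → ℤ) ⧸ KSub E) ≃+
      (↥(AutW M) ⧸ (AutW N).addSubgroupOf (AutW M))) := by
  set f : (Fin n → ℤ) →+ ↥(AutW M) :=
    (theta (ratMat M)).codRestrict (AutW M) (theta_mem hM) with hf
  set g := (QuotientAddGroup.mk' ((AutW N).addSubgroupOf (AutW M))).comp f with hg
  have hsurj : Function.Surjective g := by
    intro q
    obtain ⟨⟨v, hv⟩, rfl⟩ := QuotientAddGroup.mk'_surjective _ q
    obtain ⟨x, hx⟩ := theta_surj hM hv
    exact ⟨x, by
      simp only [hg, AddMonoidHom.comp_apply]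
      congr 1
      exact Subtype.ext hx⟩
  have hker : g.ker = KSub E := by
    ext x
    rw [AddMonoidHom.mem_ker, hg, AddMonoidHom.comp_apply,
      QuotientAddGroup.mk'_apply, QuotientAddGroup.eq_zero_iff,
      AddSubgroup.mem_addSubgroupOf]
    have : ((f x : ↥(AutW M)) : QuotLat n) = theta (ratMat M) x := rfl
    rw [this, theta_mem_AutW_iff, hNE, mem_KSub]
  exact ⟨(QuotientAddGroup.quotientAddEquivOfEq hker.symm).trans
    (QuotientAddGroup.quotientKerEquivOfSurjective g hsurj)⟩


lemma ratMat_transpose (D : Matrix (Fin n) (Fin n) ℤ) : ratMat Dᵀ = (ratMat D)ᵀ := rfl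

lemma intV_single (i : Fin n) (m : ℤ) : intV (Pi.single i m) = Pi.single i (m : ℚ) := by
  funext j
  by_cases h : j = i
  · subst h; simp [intV]
  · simp [intV, Pi.single_apply, h]

lemma single_eq_smul (i : Fin n) (m : ℤ) :
    (Pi.single i m : Fin n → ℤ) = m • (Pi.single i (1 : ℤ) : Fin n → ℤ) := by
  funext j
  by_cases h : j = i
  · subst h; simp
  · simp [Pi.single_apply, h]

/-- The level-`ℤⁿ` pairing hom `y ↦ π(u ⬝ᵥ y)`. -/
def pairLev (u : Fin n → ℚ) : (Fin n → ℤ) →+ ℚ ⧸ ZinQ :=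
  AddMonoidHom.mk' (fun y => piZ (u ⬝ᵥ intV y)) (by
    intro a b
    rw [intV_add, dotProduct_add, map_add])

lemma pairLev_apply (u : Fin n → ℚ) (y : Fin n → ℤ) :
    pairLev u y = piZ (u ⬝ᵥ intV y) := rfl

lemma pairLev_int {u : Fin n → ℚ} (hu : u ∈ IntLat n) (y : Fin n → ℤ) :
    pairLev u y = 0 := by
  obtain ⟨z, rfl⟩ := mem_intLat_iff.mp hu
  rw [pairLev_apply, dot_intV, piZ_int]

section Pairing

variable {D : Matrix (Fin n) (Fin n) ℤ} (hD : D.det ≠ 0)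

include hD

lemma ratD_mul_inv_mulVec (v : Fin n → ℚ) :
    ratMat D *ᵥ ((ratMat D)⁻¹ *ᵥ v) = v := by
  rw [Matrix.mulVec_mulVec, Matrix.mul_nonsing_inv _ (isUnit_ratMat_det hD),
    Matrix.one_mulVec]

lemma ratD_inv_mul_mulVec (v : Fin n → ℚ) :
    (ratMat D)⁻¹ *ᵥ (ratMat D *ᵥ v) = v := by
  rw [Matrix.mulVec_mulVec, Matrix.nonsing_inv_mul _ (isUnit_ratMat_det hD),
    Matrix.one_mulVec]

lemma pairLev_ker_transpose (x : Fin n → ℤ) {y : Fin n → ℤ} (hy : y ∈ KSub Dᵀ) :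
    pairLev ((ratMat D)⁻¹ *ᵥ intV x) y = 0 := by
  have hDT : Dᵀ.det ≠ 0 := by rwa [Matrix.det_transpose]
  obtain ⟨z, hz⟩ := mem_intLat_iff.mp (mem_KSub.mp hy)
  have hyz : intV y = (ratMat D)ᵀ *ᵥ intV z := by
    rw [hz, ← ratMat_transpose, ratD_mul_inv_mulVec hDT]
  rw [pairLev_apply, hyz, dotProduct_mulVec, Matrix.vecMul_transpose,
    ratD_mul_inv_mulVec hD, dot_intV, piZ_int]

/-- The pairing hom `ℤⁿ →+ Hom(ℤⁿ/DᵀZⁿ, ℚ/ℤ)`. -/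
def pairHom : (Fin n → ℤ) →+ (((Fin n → ℤ) ⧸ KSub Dᵀ) →+ ℚ ⧸ ZinQ) :=
  AddMonoidHom.mk' (fun x => QuotientAddGroup.lift (KSub Dᵀ)
    (pairLev ((ratMat D)⁻¹ *ᵥ intV x))
    (fun y hy => pairLev_ker_transpose hD x hy)) (by
    intro a b
    apply QuotientAddGroup.addMonoidHom_ext
    refine AddMonoidHom.ext fun y => ?_
    simp only [AddMonoidHom.comp_apply, QuotientAddGroup.mk'_apply, AddMonoidHom.add_apply]
    show pairLev _ y = pairLev _ y + pairLev _ y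
    rw [pairLev_apply, pairLev_apply, pairLev_apply, intV_add, Matrix.mulVec_add,
      add_dotProduct, map_add])

lemma pairHom_apply_mk (x y : Fin n → ℤ) :
    pairHom hD x (QuotientAddGroup.mk' (KSub Dᵀ) y)
      = piZ (((ratMat D)⁻¹ *ᵥ intV x) ⬝ᵥ intV y) := rfl

lemma pairHom_ker : (pairHom hD).ker = KSub D := by
  ext x
  constructor
  · intro hx
    rw [AddMonoidHom.mem_ker] at hx
    rw [mem_KSub]
    intro j
    have h := congrArg (fun φ => φ (QuotientAddGroup.mk' (KSub Dᵀ) (Pi.single j 1))) hx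
    simp only [AddMonoidHom.zero_apply] at h
    rw [pairHom_apply_mk, intV_single] at h
    rw [dotProduct_single, Int.cast_one, mul_one] at h
    obtain ⟨m, hm⟩ := piZ_eq_zero_iff.mp h
    exact ⟨m, hm.symm⟩
  · intro hx
    rw [AddMonoidHom.mem_ker]
    apply QuotientAddGroup.addMonoidHom_ext
    refine AddMonoidHom.ext fun y => ?_
    simp only [AddMonoidHom.comp_apply, QuotientAddGroup.mk'_apply, AddMonoidHom.zero_comp,
      AddMonoidHom.zero_apply]
    show pairLev _ y = 0
    exact pairLev_int (mem_KSub.mp hx) y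

lemma pairHom_surjective : Function.Surjective (pairHom hD) := by
  intro φ
  have hDT : Dᵀ.det ≠ 0 := by rwa [Matrix.det_transpose]
  set ψ := φ.comp (QuotientAddGroup.mk' (KSub Dᵀ)) with hψ
  -- choose rational representatives of the values on basis vectors
  have hrep : ∀ i : Fin n, ∃ r : ℚ, piZ r = ψ (Pi.single i 1) := fun i =>
    QuotientAddGroup.mk'_surjective ZinQ (ψ (Pi.single i 1))
  choose r hr using hrep
  -- ψ agrees with pairLev r
  have hψr : ψ = pairLev r := by
    apply AddMonoidHom.functions_ext
    intro i m
    rw [single_eq_smul i m, map_zsmul, map_zsmul, ← hr, pairLev_apply, intV_single,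
      dotProduct_single, Int.cast_one, mul_one]
  -- r = D⁻¹ x for an integer vector x
  have hDr : ratMat D *ᵥ r ∈ IntLat n := by
    intro j
    have hyK : (Dᵀ *ᵥ Pi.single j 1) ∈ KSub Dᵀ := by
      rw [mem_KSub, ← ratMat_mulVec_intV, ratD_inv_mul_mulVec hDT]
      exact intV_mem _
    have h0 : ψ (Dᵀ *ᵥ Pi.single j 1) = 0 := by
      rw [hψ, AddMonoidHom.comp_apply, QuotientAddGroup.mk'_apply]
      rw [(QuotientAddGroup.eq_zero_iff _).mpr hyK]
      exact map_zero φ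
    rw [hψr, pairLev_apply, ← ratMat_mulVec_intV, ratMat_transpose,
      dotProduct_mulVec, Matrix.vecMul_transpose, intV_single,
      dotProduct_single, Int.cast_one, mul_one] at h0
    obtain ⟨m, hm⟩ := piZ_eq_zero_iff.mp h0
    exact ⟨m, hm.symm⟩
  obtain ⟨x, hx⟩ := mem_intLat_iff.mp hDr
  refine ⟨x, ?_⟩
  have heq : (ratMat D)⁻¹ *ᵥ intV x = r := by rw [hx, ratD_inv_mul_mulVec hD]
  apply QuotientAddGroup.addMonoidHom_ext
  refine AddMonoidHom.ext fun y => ?_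
  simp only [AddMonoidHom.comp_apply, QuotientAddGroup.mk'_apply]
  show piZ (((ratMat D)⁻¹ *ᵥ intV x) ⬝ᵥ intV y) = ψ y
  rw [heq, hψr, pairLev_apply]

/-- `ℤⁿ/Dℤⁿ` is isomorphic to the `ℚ/ℤ`-dual of `ℤⁿ/Dᵀℤⁿ`. -/
lemma coker_equiv_dual : Nonempty (((Fin n → ℤ) ⧸ KSub D) ≃+
    (((Fin n → ℤ) ⧸ KSub Dᵀ) →+ ℚ ⧸ ZinQ)) :=
  ⟨(QuotientAddGroup.quotientAddEquivOfEq (pairHom_ker hD).symm).trans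
    (QuotientAddGroup.quotientKerEquivOfSurjective _ (pairHom_surjective hD))⟩

end Pairing


section SelfDual

lemma zmod_hom_ext (k : ℕ) {A : Type} [AddCommGroup A] (f g : ZMod k →+ A)
    (h : f 1 = g 1) : f = g := by
  ext a
  obtain ⟨x, rfl⟩ := ZMod.intCast_surjective a
  have hx : ((x : ZMod k)) = x • (1 : ZMod k) := by simp
  rw [hx, map_zsmul, map_zsmul, h]

variable (k : ℕ) [NeZero k]

/-- The character of `ZMod k` sending `1` to `m/k`. -/
def chi1 (m : ℤ) : ZMod k →+ ℚ ⧸ ZinQ :=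
  ZMod.lift k ⟨zmultiplesHom _ (piZ ((m : ℚ) / (k : ℚ))), by
    rw [zmultiplesHom_apply, ← map_zsmul piZ]
    have h : (k : ℤ) • ((m : ℚ) / (k : ℚ)) = (m : ℚ) := by
      have hk : (k : ℚ) ≠ 0 := Nat.cast_ne_zero.mpr (NeZero.ne k)
      rw [zsmul_eq_mul]; push_cast; field_simp
    rw [h, piZ_int]⟩

lemma chi1_one (m : ℤ) : chi1 k m 1 = piZ ((m : ℚ) / (k : ℚ)) := by
  have h : (1 : ZMod k) = ((1 : ℤ) : ZMod k) := by norm_cast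
  rw [chi1, h, ZMod.lift_coe]
  simp [zmultiplesHom_apply]

/-- `chi1` as an additive hom in `m`. -/
def chiInt : ℤ →+ (ZMod k →+ ℚ ⧸ ZinQ) :=
  AddMonoidHom.mk' (chi1 k) (by
    intro a b
    apply zmod_hom_ext
    rw [AddMonoidHom.add_apply, chi1_one, chi1_one, chi1_one, ← map_add piZ]
    congr 1
    push_cast
    ring)

lemma chiInt_one (m : ℤ) : chiInt k m 1 = piZ ((m : ℚ) / (k : ℚ)) := chi1_one k m

/-- The self-duality map of `ZMod k`. -/
def zmodDualHom : ZMod k →+ (ZMod k →+ ℚ ⧸ ZinQ) :=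
  ZMod.lift k ⟨chiInt k, by
    apply zmod_hom_ext
    rw [chiInt_one, AddMonoidHom.zero_apply]
    have hk : (k : ℚ) ≠ 0 := Nat.cast_ne_zero.mpr (NeZero.ne k)
    have h : ((k : ℤ) : ℚ) / (k : ℚ) = ((1 : ℤ) : ℚ) := by
      push_cast
      field_simp
    rw [h, piZ_int]⟩

lemma zmodDualHom_intCast (m : ℤ) :
    zmodDualHom k ((m : ℤ) : ZMod k) = chiInt k m := ZMod.lift_coe k _ m

lemma zmodDualHom_bijective : Function.Bijective (zmodDualHom k) := by
  have hk : (k : ℚ) ≠ 0 := Nat.cast_ne_zero.mpr (NeZero.ne k)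
  constructor
  · rw [injective_iff_map_eq_zero]
    intro a ha
    obtain ⟨m, rfl⟩ := ZMod.intCast_surjective a
    rw [zmodDualHom_intCast] at ha
    have h1 : chiInt k m 1 = 0 := by rw [ha]; rfl
    rw [chiInt_one] at h1
    obtain ⟨t, ht⟩ := piZ_eq_zero_iff.mp h1
    have hm : (m : ℚ) = (t : ℚ) * (k : ℚ) := by
      field_simp at ht
      linarith [ht]
    have hmz : m = t * (k : ℤ) := by exact_mod_cast hm
    rw [hmz]
    push_cast
    simp [ZMod.natCast_self]
  · intro φ
    obtain ⟨r, hr⟩ := QuotientAddGroup.mk'_surjective ZinQ (φ 1)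
    have hk1 : (k : ℤ) • (1 : ZMod k) = 0 := by
      simp [ZMod.natCast_self]
    have hkq : (k : ℤ) • φ 1 = 0 := by
      rw [← map_zsmul φ, hk1, map_zero]
    have : piZ ((k : ℤ) • r) = 0 := by
      rw [map_zsmul]
      rw [show piZ r = φ 1 from hr]
      exact hkq
    obtain ⟨t, ht⟩ := piZ_eq_zero_iff.mp this
    have hrt : r = (t : ℚ) / (k : ℚ) := by
      rw [eq_div_iff hk]
      rw [zsmul_eq_mul] at ht
      push_cast at ht ⊢
      linarith [ht]
    refine ⟨((t : ℤ) : ZMod k), ?_⟩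
    rw [zmodDualHom_intCast]
    apply zmod_hom_ext
    rw [chiInt_one, ← hrt]
    exact hr

/-- Self-duality of `ZMod k`. -/
def zmodDual : ZMod k ≃+ (ZMod k →+ ℚ ⧸ ZinQ) :=
  AddEquiv.ofBijective (zmodDualHom k) (zmodDualHom_bijective k)

/-- Every finite abelian group is isomorphic to its `ℚ/ℤ`-dual. -/
lemma selfDual (G : Type) [AddCommGroup G] [Finite G] :
    Nonempty (G ≃+ (G →+ ℚ ⧸ ZinQ)) := by
  classical
  obtain ⟨ι, fι, m, hm, ⟨e⟩⟩ := AddCommGroup.equiv_directSum_zmod_of_finite' G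
  haveI : ∀ i, NeZero (m i) := fun i => ⟨by have := hm i; omega⟩
  let e2 : G ≃+ ∀ i, ZMod (m i) := e.trans (DirectSum.addEquivProd _)
  exact ⟨e2.trans (((AddEquiv.piCongrRight (fun i => zmodDual (m i))).trans
    (Pi.addMonoidHomAddEquiv (fun i => ZMod (m i)) (ℚ ⧸ ZinQ)).symm).trans
    (AddEquiv.addMonoidHomCongrLeft e2.symm))⟩

end SelfDual


section Finiteness

variable {D : Matrix (Fin n) (Fin n) ℤ} (hD : D.det ≠ 0)

include hD

lemma det_smul_mem_KSub (z : Fin n → ℤ) : D.det • z ∈ KSub D := by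
  have h1 : D *ᵥ (D.adjugate *ᵥ z) = D.det • z := by
    rw [Matrix.mulVec_mulVec, Matrix.mul_adjugate, Matrix.smul_mulVec,
      Matrix.one_mulVec]
  rw [mem_KSub, ← h1, ← ratMat_mulVec_intV, ratD_inv_mul_mulVec hD]
  exact intV_mem _

lemma int_smul_mem_KSub {c : ℤ} (hc : c = D.det ∨ c = -D.det) (z : Fin n → ℤ) :
    c • z ∈ KSub D := by
  rcases hc with rfl | rfl
  · exact det_smul_mem_KSub hD z
  · have : (-D.det) • z = -(D.det • z) := by rw [neg_smul]
    rw [this]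
    exact (KSub D).neg_mem (det_smul_mem_KSub hD z)

lemma finite_coker : Finite ((Fin n → ℤ) ⧸ KSub D) := by
  set m : ℕ := D.det.natAbs with hm
  haveI : NeZero m := ⟨Int.natAbs_ne_zero.mpr hD⟩
  have hsurj : Function.Surjective
      (fun v : Fin n → ZMod m =>
        QuotientAddGroup.mk' (KSub D) (fun i => ((v i).val : ℤ))) := by
    intro q
    obtain ⟨y, rfl⟩ := QuotientAddGroup.mk'_surjective (KSub D) q
    refine ⟨fun i => ((y i : ℤ) : ZMod m), ?_⟩
    simp only []
    rw [QuotientAddGroup.mk'_eq_mk']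
    have hdvd : ∀ i, (m : ℤ) ∣ (y i - (((y i : ZMod m)).val : ℤ)) := by
      intro i
      rw [← ZMod.intCast_zmod_eq_zero_iff_dvd]
      push_cast
      rw [ZMod.natCast_val, ZMod.cast_id]
      exact sub_self _
    choose z hz using hdvd
    refine ⟨(m : ℤ) • z, ?_, ?_⟩
    · apply int_smul_mem_KSub hD
      rcases Int.natAbs_eq D.det with h | h
      · left; exact h.symm
      · right; rw [h, hm]; push_cast; ring
    · funext i
      have := hz i
      simp only [Pi.add_apply, Pi.smul_apply, smul_eq_mul]
      omega
  exact Finite.of_surjective _ hsurj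

/-- The cokernels of `D` and `Dᵀ` are isomorphic. -/
lemma coker_transpose_equiv :
    Nonempty (((Fin n → ℤ) ⧸ KSub D) ≃+ ((Fin n → ℤ) ⧸ KSub Dᵀ)) := by
  have hDT : Dᵀ.det ≠ 0 := by rwa [Matrix.det_transpose]
  haveI := finite_coker hDT
  obtain ⟨e1⟩ := coker_equiv_dual hD
  obtain ⟨e2⟩ := selfDual ((Fin n → ℤ) ⧸ KSub Dᵀ)
  exact ⟨e1.trans e2.symm⟩

end Finiteness

end Stmt12

open Stmt12 in
theorem stmt_12' (n : ℕ) (A B₁ C₁ B₂ C₂ : Matrix (Fin n) (Fin n) ℤ)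
    (hB₁ : B₁.det ≠ 0) (hC₁ : C₁.det ≠ 0) (hB₂ : B₂.det ≠ 0) (hC₂ : C₂.det ≠ 0)
    (hfact₁ : A = B₁ * C₁) (hfact₂ : A = B₂ * C₂)
    (hle : AutW C₁ ≤ AutW C₂) :
    AutW B₂ᵀ ≤ AutW B₁ᵀ ∧
      Nonempty
        ((↥(AutW C₂) ⧸ (AutW C₁).addSubgroupOf (AutW C₂)) ≃+
          (↥(AutW B₁ᵀ) ⧸ (AutW B₂ᵀ).addSubgroupOf (AutW B₁ᵀ))) := by
  classical
  have hC1u : IsUnit (ratMat C₁).det := isUnit_ratMat_det hC₁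
  have hC2u : IsUnit (ratMat C₂).det := isUnit_ratMat_det hC₂
  -- Step 1: the integer matrix D with ratMat D = ratMat C₂ * (ratMat C₁)⁻¹
  have hcol : ∀ i j, ∃ m : ℤ, (ratMat C₂ * (ratMat C₁)⁻¹) i j = (m : ℚ) := by
    intro i j
    have h1 : theta (ratMat C₁) (Pi.single j 1) ∈ AutW C₁ := theta_mem hC₁ _
    have h2 := hle h1
    rw [theta_mem_AutW_iff] at h2
    have h3 := h2 i
    rw [intV_single, Int.cast_one, Matrix.mulVec_single] at h3
    obtain ⟨m, hm⟩ := h3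
    exact ⟨m, by rw [← hm]; exact (mul_one _).symm⟩
  choose Dm hDm using hcol
  set D : Matrix (Fin n) (Fin n) ℤ := Matrix.of Dm with hDdef
  have hratD : ratMat D = ratMat C₂ * (ratMat C₁)⁻¹ := by
    ext i j
    exact (hDm i j).symm
  have hDdet : D.det ≠ 0 := by
    have hQ : (ratMat D).det ≠ 0 := by
      rw [hratD, Matrix.det_mul]
      exact mul_ne_zero (isUnit_iff_ne_zero.mp hC2u)
        (isUnit_iff_ne_zero.mp ((ratMat C₁).isUnit_nonsing_inv_det hC1u))
    have hcast : ((D.det : ℤ) : ℚ) = (ratMat D).det :=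
      RingHom.map_det (Int.castRingHom ℚ) D
    intro h0
    rw [h0] at hcast
    simp only [Int.cast_zero] at hcast
    exact hQ hcast.symm
  -- matrix identities over ℚ
  have hNE_C : ratMat C₁ * (ratMat C₂)⁻¹ = (ratMat D)⁻¹ := by
    refine (Matrix.inv_eq_right_inv ?_).symm
    rw [hratD, Matrix.mul_assoc, ← Matrix.mul_assoc (ratMat C₁)⁻¹,
      Matrix.nonsing_inv_mul _ hC1u, Matrix.one_mul, Matrix.mul_nonsing_inv _ hC2u]
  have hA1 : ratMat A = ratMat B₁ * ratMat C₁ := by rw [hfact₁]; exact ratMat_mul _ _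
  have hA2 : ratMat A = ratMat B₂ * ratMat C₂ := by rw [hfact₂]; exact ratMat_mul _ _
  have hB1 : ratMat B₁ = ratMat B₂ * ratMat D := by
    rw [hratD, ← Matrix.mul_assoc, ← hA2, hA1, Matrix.mul_assoc,
      Matrix.mul_nonsing_inv _ hC1u, Matrix.mul_one]
  have hB1T : ratMat B₁ᵀ = ratMat Dᵀ * ratMat B₂ᵀ := by
    rw [ratMat_transpose, ratMat_transpose, ratMat_transpose, hB1, Matrix.transpose_mul]
  have hB1Tdet : B₁ᵀ.det ≠ 0 := by rwa [Matrix.det_transpose]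
  have hB1Tu : IsUnit (ratMat B₁ᵀ).det := isUnit_ratMat_det hB1Tdet
  have hBT : ratMat B₂ᵀ * (ratMat B₁ᵀ)⁻¹ = (ratMat Dᵀ)⁻¹ := by
    refine (Matrix.inv_eq_right_inv ?_).symm
    rw [← Matrix.mul_assoc, ← hB1T, Matrix.mul_nonsing_inv _ hB1Tu]
  constructor
  · -- G₂ᵀ ⊆ G₁ᵀ
    intro g hg
    obtain ⟨w, hw, hmk⟩ := hg
    refine ⟨w, ?_, hmk⟩
    have hw' : ratMat B₂ᵀ *ᵥ w ∈ IntLat n := by simpa [Matrix.mulVecLin] using hw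
    have hvec : ratMat B₁ᵀ *ᵥ w = ratMat Dᵀ *ᵥ (ratMat B₂ᵀ *ᵥ w) := by
      rw [Matrix.mulVec_mulVec, ← hB1T]
    have hmem : ratMat B₁ᵀ *ᵥ w ∈ IntLat n := by
      rw [hvec]
      exact intLat_stable Dᵀ hw'
    simpa [Matrix.mulVecLin] using hmem
  · -- the quotient isomorphism
    obtain ⟨e₁⟩ := quotEquivK (M := C₂) (N := C₁) (E := D) hC₂ hNE_C
    obtain ⟨e₂⟩ := quotEquivK (M := B₁ᵀ) (N := B₂ᵀ) (E := Dᵀ) hB1Tdet hBT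
    obtain ⟨e₃⟩ := coker_transpose_equiv (D := D) hDdet
    exact ⟨(e₁.symm.trans e₃).trans e₂⟩

/-- If G₁ ⊆ G₂ then G₂ᵀ ⊆ G₁ᵀ and G₂/G₁ ≅ G₁ᵀ/G₂ᵀ. -/
theorem stmt_12 (n : ℕ) (A B₁ C₁ B₂ C₂ : Matrix (Fin n) (Fin n) ℤ)
    (hB₁ : B₁.det ≠ 0) (hC₁ : C₁.det ≠ 0) (hB₂ : B₂.det ≠ 0) (hC₂ : C₂.det ≠ 0)
    (hfact₁ : A = B₁ * C₁) (hfact₂ : A = B₂ * C₂)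
    (hle : AutW C₁ ≤ AutW C₂) :
    AutW B₂ᵀ ≤ AutW B₁ᵀ ∧
      Nonempty
        ((↥(AutW C₂) ⧸ (AutW C₁).addSubgroupOf (AutW C₂)) ≃+
          (↥(AutW B₁ᵀ) ⧸ (AutW B₂ᵀ).addSubgroupOf (AutW B₁ᵀ))) := by
  exact stmt_12' n A B₁ C₁ B₂ C₂ hB₁ hC₁ hB₂ hC₂ hfact₁ hfact₂ hle
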